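/- Suppose E_k and R are compact subsets of R^m with λ(E_k) = λ(R) for all k, E_k ∪ translates tiles (covers with measure-disjoint pieces) R^m by a lattice Λ for every k, R + Λ is a covering of R^m, and E_k → R in Hausdorff metric. Then R + Λ is a tiling of R^m (i.e., λ-almost every point lies in exactly one translate of R) if and only if ∂E_k → ∂R in Hausdorff metric, assuming additionally λ(∂R) = 0. -/

import Mathlib

open MeasureTheory Filter

section helpers
variable {m : ℕ}

lemma memImg {t y : Fin m → ℝ} {S : Set (Fin m → ℝ)} :
    y ∈ (fun x => x + t) '' S ↔ y - t ∈ S := by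
  constructor
  · rintro ⟨x, hx, rfl⟩; simpa using hx
  · intro h; exact ⟨y - t, h, sub_add_cancel y t⟩

lemma volImg (t : Fin m → ℝ) (S : Set (Fin m → ℝ)) :
    volume ((fun x => x + t) '' S) = volume S := by
  have h : (fun x => x + t) '' S = (fun x => x + (-t)) ⁻¹' S := by
    ext y
    simp only [Set.mem_preimage, memImg, sub_eq_add_neg]
  rw [h, measure_preimage_add_right]

lemma ballSubsetInterior {S : Set (Fin m → ℝ)} {x : Fin m → ℝ} {r : ℝ}
    (hS : S.Nonempty) (h1 : Metric.infDist x S < r)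
    (h2 : Metric.ball x r ∩ frontier S = ∅) : Metric.ball x r ⊆ interior S := by
  obtain ⟨y, hyS, hxy⟩ := (Metric.infDist_lt_iff hS).1 h1
  have hyb : y ∈ Metric.ball x r := Metric.mem_ball'.2 hxy
  have hnofr : ∀ w ∈ Metric.ball x r, w ∉ frontier S := by
    intro w hw hwf
    have : w ∈ Metric.ball x r ∩ frontier S := ⟨hw, hwf⟩
    simp [h2] at this
  have hcover : Metric.ball x r ⊆ interior S ∪ (closure S)ᶜ := by
    intro w hw
    by_cases hcl : w ∈ closure S
    · left
      by_contra hint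
      refine hnofr w hw ?_
      rw [frontier_eq_closure_inter_closure]
      refine ⟨hcl, ?_⟩
      rw [closure_compl]
      exact hint
    · right; exact hcl
  have hyint : y ∈ interior S := by
    rcases hcover hyb with h | h
    · exact h
    · exact absurd (subset_closure hyS) h
  intro w hw
  rcases hcover hw with h | h
  · exact h
  · exfalso
    have hpc : IsPreconnected (Metric.ball x r) := (convex_ball x r).isPreconnected
    obtain ⟨z, _, hz1, hz2⟩ := hpc (interior S) (closure S)ᶜ isOpen_interior
      isClosed_closure.isOpen_compl hcover ⟨y, hyb, hyint⟩ ⟨w, hw, h⟩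
    exact hz2 (subset_closure (interior_subset hz1))

lemma overlapNe {R : Set (Fin m → ℝ)} (hRne : R.Nonempty)
    (hRint : R = closure (interior R)) {t x : Fin m → ℝ} {ε : ℝ}
    (hball : Metric.ball x ε ⊆ interior R)
    (hx : Metric.infDist x ((fun y => y + t) '' R) < ε) :
    volume (R ∩ ((fun y => y + t) '' R)) ≠ 0 := by
  have hne : ((fun y => y + t) '' R).Nonempty := hRne.image _
  obtain ⟨w, hw, hxw⟩ := (Metric.infDist_lt_iff hne).1 hx
  have hwR : w - t ∈ closure (interior R) := by rw [← hRint]; exact memImg.1 hw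
  have hpos : 0 < ε - dist x w := by linarith
  obtain ⟨p, hp, hdp⟩ := Metric.mem_closure_iff.1 hwR _ hpos
  have hp' : p + t ∈ Metric.ball x ε := by
    have h3 : dist (p + t) w = dist p (w - t) := by
      conv_lhs => rw [show w = (w - t) + t from (sub_add_cancel w t).symm]
      rw [dist_add_right]
    have h4 := dist_triangle (p + t) w x
    rw [h3, dist_comm w x] at h4
    rw [dist_comm (w - t) p] at hdp
    rw [Metric.mem_ball]
    linarith
  have hUopen : IsOpen (interior R ∩ ((fun y => y + t) '' interior R)) :=
    isOpen_interior.inter ((isOpenMap_add_right t) _ isOpen_interior)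
  have hUne : (interior R ∩ ((fun y => y + t) '' interior R)).Nonempty :=
    ⟨p + t, hball hp', memImg.2 (by simpa [add_sub_cancel_right] using hp)⟩
  have hUsub : interior R ∩ ((fun y => y + t) '' interior R) ⊆ R ∩ ((fun y => y + t) '' R) :=
    Set.inter_subset_inter interior_subset (Set.image_mono interior_subset)
  intro h0
  exact hUopen.measure_ne_zero volume hUne (measure_mono_null hUsub h0)

lemma deepMem {Λ R Ek : Set (Fin m → ℝ)} (hRne : R.Nonempty)
    (hRint : R = closure (interior R)) {r : ℝ}
    (hcov : ⋃ t ∈ Λ, (fun x => x + t) '' Ek = Set.univ)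
    (htile : ∀ t ∈ Λ, t ≠ 0 → volume (R ∩ ((fun y => y + t) '' R)) = 0)
    (hER : ∀ y ∈ Ek, Metric.infDist y R < r)
    {q : Fin m → ℝ} (hq : Metric.ball q r ⊆ interior R) : q ∈ Ek := by
  by_contra hqE
  have hq1 : q ∈ ⋃ t ∈ Λ, (fun x => x + t) '' Ek := hcov ▸ Set.mem_univ q
  simp only [Set.mem_iUnion] at hq1
  obtain ⟨t, ht, hqt⟩ := hq1
  have hqtE : q - t ∈ Ek := memImg.1 hqt
  have htne : t ≠ 0 := by rintro rfl; exact hqE (by simpa using hqtE)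
  have h1 : Metric.infDist (q - t) R < r := hER _ hqtE
  obtain ⟨w, hwR, hdw⟩ := (Metric.infDist_lt_iff hRne).1 h1
  have h2 : Metric.infDist q ((fun y => y + t) '' R) < r := by
    calc Metric.infDist q ((fun y => y + t) '' R) ≤ dist q (w + t) :=
        Metric.infDist_le_dist_of_mem (memImg.2 (by simpa [add_sub_cancel_right] using hwR))
      _ < r := by
        conv_lhs => rw [show q = (q - t) + t from (sub_add_cancel q t).symm]
        rw [dist_add_right]; exact hdw
  exact overlapNe hRne hRint hq h2 (htile t ht htne)

end helpers

/-- Suppose compact sets `E_k` all have the same measure as `R`, each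
`E_k` tiles `ℝᵐ` by the full-rank lattice `Λ`, `R + Λ` covers `ℝᵐ`, `E_k → R` in
Hausdorff metric, `R` is compact, equal to the closure of its interior, with
`λ(∂R) = 0`. Then `R + Λ` is a tiling (distinct translates intersect in measure zero)
if and only if `∂E_k → ∂R` in Hausdorff metric. -/
theorem stmt16 (m : ℕ) (b : Module.Basis (Fin m) ℝ (Fin m → ℝ)) (Λ : Set (Fin m → ℝ))
    (hΛ : Λ = {t | ∃ c : Fin m → ℤ, t = ∑ i, (c i : ℝ) • b i})
    (R : Set (Fin m → ℝ)) (E : ℕ → Set (Fin m → ℝ))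
    (hR : IsCompact R) (hRne : R.Nonempty)
    (hRint : R = closure (interior R))
    (hRbd : volume (frontier R) = 0)
    (hE : ∀ k, IsCompact (E k)) (hEne : ∀ k, (E k).Nonempty)
    (hvol : ∀ k, volume (E k) = volume R)
    (hEcover : ∀ k, ⋃ t ∈ Λ, (fun x => x + t) '' (E k) = Set.univ)
    (hEdisj : ∀ k, ∀ t ∈ Λ, ∀ t' ∈ Λ, t ≠ t' →
      volume (((fun x => x + t) '' E k) ∩ ((fun x => x + t') '' E k)) = 0)
    (hRcover : ⋃ t ∈ Λ, (fun x => x + t) '' R = Set.univ)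
    (hconv : Tendsto (fun k => Metric.hausdorffDist (E k) R) atTop (nhds 0)) :
    (∀ t ∈ Λ, ∀ t' ∈ Λ, t ≠ t' →
        volume (((fun x => x + t) '' R) ∩ ((fun x => x + t') '' R)) = 0)
      ↔ Tendsto (fun k => Metric.hausdorffDist (frontier (E k)) (frontier R))
          atTop (nhds 0) := by
  rcases Nat.eq_zero_or_pos m with hm | hm
  · -- degenerate case m = 0
    subst hm
    haveI hsub : Subsingleton (Fin 0 → ℝ) := ⟨fun a b => funext fun i => i.elim0⟩
    constructor
    · intro _
      have hfr : ∀ S : Set (Fin 0 → ℝ), S.Nonempty → frontier S = ∅ := by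
        intro S hS
        have hSu : S = Set.univ := Set.eq_univ_of_forall fun y => by
          obtain ⟨x, hx⟩ := hS; rwa [Subsingleton.elim y x]
        rw [hSu, frontier_univ]
      have h1 : ∀ k, Metric.hausdorffDist (frontier (E k)) (frontier R) = 0 := by
        intro k; rw [hfr _ (hEne k)]; exact Metric.hausdorffDist_empty'
      simp only [h1]
      exact tendsto_const_nhds
    · intro _ t ht t' ht' hne
      exact absurd (Subsingleton.elim t t') hne
  -- main case m > 0
  haveI : Nonempty (Fin m) := ⟨⟨0, hm⟩⟩
  have h0Λ : (0 : Fin m → ℝ) ∈ Λ := by rw [hΛ]; exact ⟨0, by simp⟩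
  have himg0 : ∀ S : Set (Fin m → ℝ), (fun x => x + (0 : Fin m → ℝ)) '' S = S := by
    intro S; simp
  have hfrRne : (frontier R).Nonempty := nonempty_frontier_iff.2 ⟨hRne, hR.ne_univ⟩
  have hfrEne : ∀ k, (frontier (E k)).Nonempty := fun k =>
    nonempty_frontier_iff.2 ⟨hEne k, (hE k).ne_univ⟩
  have hfinER : ∀ k, EMetric.hausdorffEdist (E k) R ≠ ⊤ := fun k =>
    Metric.hausdorffEdist_ne_top_of_nonempty_of_bounded (hEne k) hRne (hE k).isBounded
      hR.isBounded
  have hfinFr : ∀ k, EMetric.hausdorffEdist (frontier (E k)) (frontier R) ≠ ⊤ := fun k =>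
    Metric.hausdorffEdist_ne_top_of_nonempty_of_bounded (hfrEne k) hfrRne
      ((hE k).isBounded.subset (hE k).isClosed.frontier_subset)
      (hR.isBounded.subset hR.isClosed.frontier_subset)
  have hconv' : ∀ δ : ℝ, 0 < δ → ∀ᶠ k in atTop, Metric.hausdorffDist (E k) R < δ :=
    fun δ hδ => hconv.eventually (eventually_lt_nhds hδ)
  have hER : ∀ k, ∀ y ∈ E k, Metric.infDist y R ≤ Metric.hausdorffDist (E k) R :=
    fun k y hy => Metric.infDist_le_hausdorffDist_of_mem hy (hfinER k)
  have hRE : ∀ k, ∀ y ∈ R, Metric.infDist y (E k) ≤ Metric.hausdorffDist (E k) R := by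
    intro k y hy
    rw [Metric.hausdorffDist_comm]
    refine Metric.infDist_le_hausdorffDist_of_mem hy ?_
    rw [EMetric.hausdorffEdist_comm]
    exact hfinER k
  constructor
  · -- tiling of R implies convergence of boundaries
    intro hLHS
    have htile : ∀ t ∈ Λ, t ≠ 0 → volume (R ∩ ((fun y => y + t) '' R)) = 0 := by
      intro t ht htne
      have h := hLHS 0 h0Λ t ht (fun h => htne h.symm)
      rwa [himg0] at h
    have main : ∀ ε : ℝ, 0 < ε → ∀ᶠ k in atTop,
        Metric.hausdorffDist (frontier (E k)) (frontier R) ≤ ε := by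
      intro ε hε
      -- part (i): points of ∂E_k are near ∂R
      have hpart1 : ∀ᶠ k in atTop, ∀ x ∈ frontier (E k), ∃ y ∈ frontier R, dist x y ≤ ε := by
        filter_upwards [hconv' (ε / 2) (by linarith)] with k hk
        intro x hx
        by_contra hnot
        push_neg at hnot
        have hballfr : Metric.ball x ε ∩ frontier R = ∅ := by
          rw [Set.eq_empty_iff_forall_notMem]
          rintro y ⟨hy, hyf⟩
          rw [Metric.mem_ball, dist_comm] at hy
          exact absurd hy (not_lt.2 (hnot y hyf).le)
        have hxE : x ∈ E k := (hE k).isClosed.frontier_subset hx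
        have hxR : Metric.infDist x R < ε := lt_of_le_of_lt (hER k x hxE) (by linarith)
        have hballR : Metric.ball x ε ⊆ interior R := ballSubsetInterior hRne hxR hballfr
        have hxcl : x ∈ closure (E k)ᶜ := by
          rw [frontier_eq_closure_inter_closure] at hx; exact hx.2
        obtain ⟨y, hyE, hxy⟩ := Metric.mem_closure_iff.1 hxcl (ε / 4) (by linarith)
        have hy1 : y ∈ ⋃ t ∈ Λ, (fun x => x + t) '' E k := (hEcover k) ▸ Set.mem_univ y
        simp only [Set.mem_iUnion] at hy1
        obtain ⟨t, ht, hyt⟩ := hy1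
        have hytE : y - t ∈ E k := memImg.1 hyt
        have htne : t ≠ 0 := by rintro rfl; exact hyE (by simpa using hytE)
        have hb2 : Metric.ball y (ε / 2) ⊆ Metric.ball x ε := by
          intro z hz
          rw [Metric.mem_ball] at *
          have h9 := dist_triangle z y x
          rw [dist_comm y x] at h9
          linarith
        have hidyR : Metric.infDist (y - t) R < ε / 2 :=
          lt_of_le_of_lt (hER k _ hytE) (by linarith)
        obtain ⟨w, hwR, hdw⟩ := (Metric.infDist_lt_iff hRne).1 hidyR
        have hid : Metric.infDist y ((fun z => z + t) '' R) < ε / 2 := by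
          calc Metric.infDist y ((fun z => z + t) '' R) ≤ dist y (w + t) :=
              Metric.infDist_le_dist_of_mem
                (memImg.2 (by simpa [add_sub_cancel_right] using hwR))
            _ < ε / 2 := by
              conv_lhs => rw [show y = (y - t) + t from (sub_add_cancel y t).symm]
              rw [dist_add_right]; exact hdw
        exact overlapNe hRne hRint (hb2.trans hballR) hid (htile t ht htne)
      -- part (ii): points of ∂R are near ∂E_k
      have hfrRcpt : IsCompact (frontier R) :=
        hR.of_isClosed_subset isClosed_frontier hR.isClosed.frontier_subset
      have hpoint : ∀ x ∈ frontier R, ∀ᶠ k in atTop,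
          Metric.infDist x (frontier (E k)) < ε / 2 := by
        intro x hx
        have hxcl : x ∈ closure Rᶜ := by
          rw [frontier_eq_closure_inter_closure] at hx; exact hx.2
        obtain ⟨z, hzR, hxz⟩ := Metric.mem_closure_iff.1 hxcl (ε / 16) (by linarith)
        have hz1 : z ∈ ⋃ t ∈ Λ, (fun x => x + t) '' R := hRcover ▸ Set.mem_univ z
        simp only [Set.mem_iUnion] at hz1
        obtain ⟨t, ht, hzt⟩ := hz1
        have htne : t ≠ 0 := by rintro rfl; exact hzR (by simpa using memImg.1 hzt)
        have hztR : z - t ∈ closure (interior R) := by rw [← hRint]; exact memImg.1 hzt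
        obtain ⟨p', hp', hdp'⟩ := Metric.mem_closure_iff.1 hztR (ε / 16) (by linarith)
        obtain ⟨r0, hr0, hb0⟩ := Metric.isOpen_iff.1 isOpen_interior p' hp'
        have hrpos : 0 < min r0 (ε / 16) := lt_min hr0 (by linarith)
        set r : ℝ := min r0 (ε / 16) with hrdef
        have hrball : Metric.ball p' r ⊆ interior R :=
          (Metric.ball_subset_ball (min_le_left _ _)).trans hb0
        have hrε : r ≤ ε / 16 := min_le_right _ _
        filter_upwards [hconv' (min (r / 2) (ε / 2)) (by positivity)] with k hk
        by_contra hnot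
        push_neg at hnot
        have hballfrE : Metric.ball x (ε / 2) ∩ frontier (E k) = ∅ := by
          rw [Set.eq_empty_iff_forall_notMem]
          rintro y ⟨hy, hyf⟩
          rw [Metric.mem_ball, dist_comm] at hy
          have hle : Metric.infDist x (frontier (E k)) ≤ dist x y :=
            Metric.infDist_le_dist_of_mem hyf
          linarith
        have hxR2 : Metric.infDist x (E k) < ε / 2 :=
          lt_of_le_of_lt (hRE k x (hR.isClosed.frontier_subset hx))
            (lt_of_lt_of_le hk (min_le_right _ _))
        have hballE : Metric.ball x (ε / 2) ⊆ interior (E k) :=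
          ballSubsetInterior (hEne k) hxR2 hballfrE
        have hdxp : dist x (p' + t) < ε / 8 := by
          have h1 : dist z (p' + t) = dist (z - t) p' := by
            conv_lhs => rw [show z = (z - t) + t from (sub_add_cancel z t).symm]
            rw [dist_add_right]
          have h2 := dist_triangle x z (p' + t)
          rw [h1] at h2
          linarith
        have hbpE : Metric.ball (p' + t) (r / 2) ⊆ E k := by
          intro q hq
          have hq2 : q ∈ Metric.ball x (ε / 2) := by
            rw [Metric.mem_ball] at *
            have h3 := dist_triangle q (p' + t) x
            rw [dist_comm x (p' + t)] at hdxp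
            linarith
          exact interior_subset (hballE hq2)
        have hbp'E : Metric.ball p' (r / 2) ⊆ E k := by
          intro q hq
          refine deepMem hRne hRint (hEcover k) htile
            (fun y hy => lt_of_le_of_lt (hER k y hy) (lt_of_lt_of_le hk (min_le_left _ _)))
            (q := q) ?_
          intro w hw
          apply hrball
          rw [Metric.mem_ball] at *
          have h4 := dist_triangle w q p'
          linarith
        have hsub2 : Metric.ball (p' + t) (r / 2) ⊆ (E k) ∩ ((fun x => x + t) '' E k) := by
          intro q hq
          refine ⟨hbpE hq, memImg.2 (hbp'E ?_)⟩
          have h5 : dist (q - t) p' = dist q (p' + t) := by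
            conv_lhs => rw [show p' = (p' + t) - t from (add_sub_cancel_right p' t).symm]
            rw [dist_sub_right]
          rw [Metric.mem_ball] at *
          rw [h5]
          exact hq
        have hdis := hEdisj k 0 h0Λ t ht (fun h => htne h.symm)
        rw [himg0] at hdis
        exact (Metric.isOpen_ball.measure_ne_zero volume
          ⟨p' + t, Metric.mem_ball_self (by positivity)⟩) (measure_mono_null hsub2 hdis)
      obtain ⟨T, hTmem, hTcov⟩ := hfrRcpt.elim_nhds_subcover (fun x => Metric.ball x (ε / 4))
        (fun x _ => Metric.ball_mem_nhds x (by linarith))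
      have hev2 : ∀ᶠ k in atTop, ∀ x ∈ T, Metric.infDist x (frontier (E k)) < ε / 2 :=
        (eventually_all_finset T).2 fun x hx => hpoint x (hTmem x hx)
      filter_upwards [hpart1, hev2] with k h1 h2
      refine Metric.hausdorffDist_le_of_mem_dist (le_of_lt hε) h1 ?_
      intro x hx
      obtain ⟨x0, hx0T, hxball⟩ := Set.mem_iUnion₂.1 (hTcov hx)
      obtain ⟨y, hyfr, hdy⟩ := (Metric.infDist_lt_iff (hfrEne k)).1 (h2 x0 hx0T)
      refine ⟨y, hyfr, ?_⟩
      have h6 := dist_triangle x x0 y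
      rw [Metric.mem_ball] at hxball
      linarith
    rw [Metric.tendsto_atTop]
    intro ε hε
    obtain ⟨N, hN⟩ := eventually_atTop.1 (main (ε / 2) (by linarith))
    refine ⟨N, fun n hn => ?_⟩
    have h := hN n hn
    rw [Real.dist_eq, sub_zero, abs_of_nonneg Metric.hausdorffDist_nonneg]
    linarith
  · -- convergence of boundaries implies tiling of R
    intro hRHS t ht t' ht' hne
    have hconv2 : ∀ δ : ℝ, 0 < δ → ∀ᶠ k in atTop,
        Metric.hausdorffDist (frontier (E k)) (frontier R) < δ :=
      fun δ hδ => hRHS.eventually (eventually_lt_nhds hδ)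
    set s : Fin m → ℝ := t' - t with hs
    have hsΛ : s ∈ Λ := by
      rw [hΛ] at ht ht' ⊢
      obtain ⟨c, hc⟩ := ht
      obtain ⟨c', hc'⟩ := ht'
      refine ⟨c' - c, ?_⟩
      rw [hs, hc, hc', ← Finset.sum_sub_distrib]
      refine Finset.sum_congr rfl fun i _ => ?_
      simp [Pi.sub_apply, Int.cast_sub, sub_smul]
    have hsne : s ≠ 0 := sub_ne_zero_of_ne (Ne.symm hne)
    have key : volume (R ∩ ((fun x => x + s) '' R)) = 0 := by
      by_contra h0
      have hsplit : R ∩ ((fun x => x + s) '' R) ⊆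
          (interior R ∩ ((fun x => x + s) '' interior R)) ∪
          (frontier R ∪ ((fun x => x + s) '' frontier R)) := by
        rintro y ⟨hy1, hy2⟩
        have hy2' : y - s ∈ R := memImg.1 hy2
        by_cases h1 : y ∈ interior R
        · by_cases h2 : y - s ∈ interior R
          · exact Or.inl ⟨h1, memImg.2 h2⟩
          · exact Or.inr (Or.inr (memImg.2 (hR.isClosed.frontier_eq ▸ ⟨hy2', h2⟩)))
        · exact Or.inr (Or.inl (hR.isClosed.frontier_eq ▸ ⟨hy1, h1⟩))
      have hz : volume (frontier R ∪ ((fun x => x + s) '' frontier R)) = 0 := by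
        apply measure_union_null hRbd
        rw [volImg]; exact hRbd
      have hint0 : volume (interior R ∩ ((fun x => x + s) '' interior R)) ≠ 0 := by
        intro hi
        exact h0 (measure_mono_null hsplit (measure_union_null hi hz))
      obtain ⟨p, hp1, hp2⟩ := nonempty_of_measure_ne_zero hint0
      have hopen : IsOpen (interior R ∩ ((fun x => x + s) '' interior R)) :=
        isOpen_interior.inter ((isOpenMap_add_right s) _ isOpen_interior)
      obtain ⟨r, hrpos, hbr⟩ := Metric.isOpen_iff.1 hopen p ⟨hp1, hp2⟩
      obtain ⟨k, hk1, hk2⟩ :=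
        ((hconv' (r / 4) (by positivity)).and (hconv2 (r / 4) (by positivity))).exists
      have hclaim : ∀ q : Fin m → ℝ, Metric.ball q (r / 2) ⊆ interior R → q ∈ E k := by
        intro q hq
        have hqR : q ∈ R := interior_subset (hq (Metric.mem_ball_self (by positivity)))
        have hqE : Metric.infDist q (E k) < r / 4 := lt_of_le_of_lt (hRE k q hqR) hk1
        have hfr0 : Metric.ball q (r / 4) ∩ frontier (E k) = ∅ := by
          rw [Set.eq_empty_iff_forall_notMem]
          rintro y ⟨hy, hyf⟩
          have h5 : Metric.infDist y (frontier R) ≤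
              Metric.hausdorffDist (frontier (E k)) (frontier R) :=
            Metric.infDist_le_hausdorffDist_of_mem hyf (hfinFr k)
          obtain ⟨w, hwfr, hdw⟩ := (Metric.infDist_lt_iff hfrRne).1 (lt_of_le_of_lt h5 hk2)
          have hwball : w ∈ Metric.ball q (r / 2) := by
            have h8 := dist_triangle w y q
            rw [dist_comm w y] at h8
            rw [Metric.mem_ball] at hy ⊢
            linarith
          exact (hR.isClosed.frontier_eq ▸ hwfr).2 (hq hwball)
        have hsubE := ballSubsetInterior (hEne k) hqE hfr0
        exact interior_subset (hsubE (Metric.mem_ball_self (by positivity)))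
      have hsub2 : Metric.ball p (r / 2) ⊆ (E k) ∩ ((fun x => x + s) '' E k) := by
        intro q hq
        constructor
        · apply hclaim
          intro w hw
          have hwb : w ∈ Metric.ball p r := by
            rw [Metric.mem_ball] at *
            have h9 := dist_triangle w q p
            linarith
          exact (hbr hwb).1
        · refine memImg.2 (hclaim _ ?_)
          intro w hw
          have hws : w + s ∈ Metric.ball p r := by
            rw [Metric.mem_ball] at *
            have h6 : dist (w + s) q = dist w (q - s) := by
              conv_lhs => rw [show q = (q - s) + s from (sub_add_cancel q s).symm]
              rw [dist_add_right]
            have h7 := dist_triangle (w + s) q p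
            rw [h6] at h7
            linarith
          have h10 := memImg.1 (hbr hws).2
          rwa [add_sub_cancel_right] at h10
      have hdis := hEdisj k 0 h0Λ s hsΛ (fun h => hsne h.symm)
      rw [himg0] at hdis
      exact (Metric.isOpen_ball.measure_ne_zero volume
        ⟨p, Metric.mem_ball_self (by positivity)⟩) (measure_mono_null hsub2 hdis)
    have hseteq : ((fun x => x + t) '' R) ∩ ((fun x => x + t') '' R) =
        (fun x => x + t) '' (R ∩ ((fun x => x + s) '' R)) := by
      ext y
      simp only [Set.mem_inter_iff, memImg]
      have h11 : y - t - s = y - t' := by rw [hs]; ring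
      rw [h11]
    rw [hseteq, volImg, key]
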